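/- Let K be a compact convex set of n×n complex positive semidefinite matrices such that α·I ∈ K for some real α > 0, and let E be an n×n Hermitian matrix. Define Φ_E(X) = Re Tr(E·X) + Re Tr(X · log X), where log X applies the real logarithm to eigenvalues via the continuous functional calculus with the convention log 0 = 0. If W ∈ K satisfies Φ_E(W) ≤ Φ_E(X) for all X ∈ K, then W is positive definite. -/

import Mathlib

open Matrix Polynomial
open scoped ComplexOrder

/-- The matrix logarithm, applying `Real.log` (with `Real.log 0 = 0`) to the eigenvalues of a
Hermitian matrix via the continuous functional calculus (junk value on non-Hermitian input). -/
noncomputable def matLog {n : ℕ} (M : Matrix (Fin n) (Fin n) ℂ) : Matrix (Fin n) (Fin n) ℂ :=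
  cfc Real.log M

/-- `Φ_E(X) = Re Tr(E·X) + Re Tr(X·log X)`. -/
noncomputable def PhiE {n : ℕ} (E X : Matrix (Fin n) (Fin n) ℂ) : ℝ :=
  ((E * X).trace).re + ((X * matLog X).trace).re

/-- Conjugation by a unitary matrix as an `ℝ`-algebra homomorphism. -/
noncomputable def conjAlgHom (U : Matrix.unitaryGroup (Fin n) ℂ) :
    Matrix (Fin n) (Fin n) ℂ →ₐ[ℝ] Matrix (Fin n) (Fin n) ℂ where
  toFun M := (U : Matrix (Fin n) (Fin n) ℂ) * M * star (U : Matrix (Fin n) (Fin n) ℂ)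
  map_one' := by
    show (U : Matrix (Fin n) (Fin n) ℂ) * 1 * star (U : Matrix (Fin n) (Fin n) ℂ) = 1
    rw [mul_one]
    exact U.2.2
  map_mul' A B := by
    have h : star (U : Matrix (Fin n) (Fin n) ℂ) * U = 1 := U.2.1
    calc (U : Matrix (Fin n) (Fin n) ℂ) * (A * B) * star (U : Matrix (Fin n) (Fin n) ℂ)
        = (U * A) * (star (U : Matrix (Fin n) (Fin n) ℂ) * U) * (B * star (U : Matrix (Fin n) (Fin n) ℂ)) := by
          rw [h]; noncomm_ring
      _ = _ := by noncomm_ring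
  map_zero' := by simp
  map_add' A B := by noncomm_ring
  commutes' r := by
    simp only [Algebra.algebraMap_eq_smul_one]
    rw [mul_smul_comm, smul_mul_assoc, mul_one]
    congr 1
    exact U.2.2

lemma cfc_conj_diag (U : Matrix.unitaryGroup (Fin n) ℂ) (d : Fin n → ℝ) (f : ℝ → ℝ) :
    cfc f ((U : Matrix (Fin n) (Fin n) ℂ) * diagonal (RCLike.ofReal ∘ d) *
        star (U : Matrix (Fin n) (Fin n) ℂ)) =
      (U : Matrix (Fin n) (Fin n) ℂ) * diagonal (RCLike.ofReal ∘ f ∘ d) *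
        star (U : Matrix (Fin n) (Fin n) ℂ) := by
  classical
  set A : Matrix (Fin n) (Fin n) ℂ :=
    (U : Matrix (Fin n) (Fin n) ℂ) * diagonal (RCLike.ofReal ∘ d) * star (U : Matrix (Fin n) (Fin n) ℂ) with hA_def
  have hAherm : A.IsHermitian := by
    rw [hA_def, star_eq_conjTranspose (U : Matrix (Fin n) (Fin n) ℂ)]
    exact isHermitian_mul_mul_conjTranspose _ <| isHermitian_diagonal_of_self_adjoint _ <| by
      ext i
      simp [Function.comp, RCLike.star_def]
  have hAsa : _root_.IsSelfAdjoint A := hAherm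
  -- spectrum is contained in the range of d
  have hspec : spectrum ℝ A ⊆ Set.range d := by
    intro x hx
    rw [← spectrum.algebraMap_mem_iff ℂ] at hx
    rw [hA_def] at hx
    rw [Unitary.spectrum_star_right_conjugate, spectrum_diagonal] at hx
    obtain ⟨i, hi⟩ := hx
    refine ⟨i, RCLike.ofReal_injective (K := ℂ) ?_⟩
    simpa [RCLike.algebraMap_eq_ofReal] using hi
  -- interpolation polynomial
  set s : Finset ℝ := Finset.image d Finset.univ with hs
  set q : Polynomial ℝ := Lagrange.interpolate s id f with hq
  have hqeval : ∀ i : Fin n, q.eval (d i) = f (d i) := by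
    intro i
    have := Lagrange.eval_interpolate_at_node (r := f) (v := id) Function.injective_id.injOn
      (Finset.mem_image_of_mem d (Finset.mem_univ i))
    exact this
  have hcongr : cfc f A = cfc q.eval A := by
    apply cfc_congr
    intro x hx
    obtain ⟨i, rfl⟩ := hspec hx
    exact (hqeval i).symm
  rw [hcongr, cfc_polynomial q A hAsa]
  have h1 : A = conjAlgHom U (diagonal (RCLike.ofReal ∘ d)) := rfl
  have h2 : (diagonal (RCLike.ofReal ∘ d) : Matrix (Fin n) (Fin n) ℂ) =
      Matrix.diagonalAlgHom (n := Fin n) (α := ℂ) ℝ (RCLike.ofReal ∘ d) := rfl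
  rw [h1, Polynomial.aeval_algHom_apply, h2, Polynomial.aeval_algHom_apply]
  have h5 : (Polynomial.aeval ((RCLike.ofReal ∘ d) : Fin n → ℂ) q : Fin n → ℂ) =
      (RCLike.ofReal ∘ f ∘ d : Fin n → ℂ) := by
    funext i
    show (Pi.evalAlgHom ℝ (fun _ : Fin n => ℂ) i)
        ((Polynomial.aeval ((RCLike.ofReal ∘ d) : Fin n → ℂ)) q) = _
    rw [← Polynomial.aeval_algHom_apply]
    rw [show (Pi.evalAlgHom ℝ (fun _ : Fin n => ℂ) i) ((RCLike.ofReal ∘ d) : Fin n → ℂ)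
      = Complex.ofRealAm (d i) from rfl, Polynomial.aeval_algHom_apply]
    simp [hqeval i]
  rw [h5]
  rfl

lemma trace_conj_diag_mul_matLog (U : Matrix.unitaryGroup (Fin n) ℂ) (d : Fin n → ℝ) :
    ((((U : Matrix (Fin n) (Fin n) ℂ) * diagonal (RCLike.ofReal ∘ d) *
        star (U : Matrix (Fin n) (Fin n) ℂ)) *
      matLog ((U : Matrix (Fin n) (Fin n) ℂ) * diagonal (RCLike.ofReal ∘ d) *
        star (U : Matrix (Fin n) (Fin n) ℂ))).trace).re
      = ∑ i, d i * Real.log (d i) := by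
  rw [matLog, cfc_conj_diag U d Real.log]
  have hmul : ((U : Matrix (Fin n) (Fin n) ℂ) * diagonal (RCLike.ofReal ∘ d) *
        star (U : Matrix (Fin n) (Fin n) ℂ)) *
      ((U : Matrix (Fin n) (Fin n) ℂ) * diagonal (RCLike.ofReal ∘ Real.log ∘ d) *
        star (U : Matrix (Fin n) (Fin n) ℂ))
      = (U : Matrix (Fin n) (Fin n) ℂ) *
          (diagonal (RCLike.ofReal ∘ d) * diagonal (RCLike.ofReal ∘ Real.log ∘ d)) *
          star (U : Matrix (Fin n) (Fin n) ℂ) :=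
    (map_mul (conjAlgHom U) _ _).symm
  rw [hmul, trace_mul_cycle, ← mul_assoc, U.2.1, one_mul, diagonal_mul_diagonal,
    trace_diagonal]
  have : ∀ i : Fin n, ((RCLike.ofReal ∘ d) i * (RCLike.ofReal ∘ Real.log ∘ d) i : ℂ)
      = ((d i * Real.log (d i) : ℝ) : ℂ) := by
    intro i; simp [Function.comp]
  rw [Finset.sum_congr rfl fun i _ => this i, ← Complex.ofReal_sum]
  exact Complex.ofReal_re _

lemma posDef_of_eigenvalues_pos {W : Matrix (Fin n) (Fin n) ℂ} (hW : W.PosSemidef)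
    (h : ∀ i, 0 < hW.isHermitian.eigenvalues i) : W.PosDef := by
  exact hW.isHermitian.posDef_iff_eigenvalues_pos.mpr h

/-- **Minimizers of `Φ_E` over `K` are positive definite** (Lemma 11 of the paper):
if `K` is a compact convex set of positive semidefinite matrices containing `α·I` for some
`α > 0`, `E` is Hermitian, and `W ∈ K` minimizes `Φ_E` over `K`, then `W` is positive
definite. -/
theorem stmt15 {n : ℕ} (K : Set (Matrix (Fin n) (Fin n) ℂ))
    (hKcompact : IsCompact K) (hKconvex : Convex ℝ K)
    (hKpsd : ∀ X ∈ K, X.PosSemidef)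
    (α : ℝ) (hα : 0 < α) (hαK : α • (1 : Matrix (Fin n) (Fin n) ℂ) ∈ K)
    (E : Matrix (Fin n) (Fin n) ℂ) (hE : E.IsHermitian)
    (W : Matrix (Fin n) (Fin n) ℂ) (hW : W ∈ K)
    (hmin : ∀ X ∈ K, PhiE E W ≤ PhiE E X) :
    W.PosDef := by
  classical
  have hWpsd := hKpsd W hW
  have hWH : W.IsHermitian := hWpsd.isHermitian
  by_contra hnd
  have hex : ∃ j, hWH.eigenvalues j = 0 := by
    by_contra hcon
    push_neg at hcon
    exact hnd (posDef_of_eigenvalues_pos hWpsd fun i =>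
      lt_of_le_of_ne (hWpsd.eigenvalues_nonneg i) (Ne.symm (hcon i)))
  obtain ⟨j, hj⟩ := hex
  set lam : Fin n → ℝ := hWH.eigenvalues with hlam
  set U := hWH.eigenvectorUnitary with hU
  have hlam_nonneg : ∀ i, 0 ≤ lam i := fun i => hWpsd.eigenvalues_nonneg i
  have hspec : W = (U : Matrix (Fin n) (Fin n) ℂ) * diagonal (RCLike.ofReal ∘ lam) *
      star (U : Matrix (Fin n) (Fin n) ℂ) := hWH.spectral_theorem
  have hSW : ((W * matLog W).trace).re = ∑ i, lam i * Real.log (lam i) := by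
    rw [hspec]
    exact trace_conj_diag_mul_matLog U lam
  set R1 : ℝ := ((E * W).trace).re with hR1
  set R2 : ℝ := (E.trace).re with hR2
  set S : ℝ := ∑ i ∈ Finset.univ.erase j,
      (α * Real.log α - lam i * Real.log (lam i)) with hS
  set C : ℝ := (α * R2 - R1) + S + α * Real.log α with hC
  have key : ∀ t : ℝ, 0 < t → t ≤ 1 → 0 ≤ C + α * Real.log t := by
    intro t ht ht1
    set μ : Fin n → ℝ := fun i => (1 - t) * lam i + t * α with hμ
    set Wt : Matrix (Fin n) (Fin n) ℂ :=
      (U : Matrix (Fin n) (Fin n) ℂ) * diagonal (RCLike.ofReal ∘ μ) *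
        star (U : Matrix (Fin n) (Fin n) ℂ) with hWt
    have hdiag : ((1 - t) • diagonal (RCLike.ofReal ∘ lam) +
        (t * α) • (1 : Matrix (Fin n) (Fin n) ℂ)) = diagonal (RCLike.ofReal ∘ μ) := by
      ext i k
      rcases eq_or_ne i k with rfl | h
      · simp only [Matrix.add_apply, Matrix.smul_apply, Matrix.diagonal_apply_eq,
          Matrix.one_apply_eq, Function.comp_apply, hμ, Complex.real_smul, smul_eq_mul,
          show (RCLike.ofReal : ℝ → ℂ) = Complex.ofReal from rfl]
        push_cast
        ring
      · simp [Matrix.diagonal_apply_ne _ h, Matrix.one_apply_ne h]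
    have hWc : W = conjAlgHom U (diagonal (RCLike.ofReal ∘ lam)) := hspec
    have hWt_eq : Wt = (1 - t) • W + t • (α • (1 : Matrix (Fin n) (Fin n) ℂ)) := by
      have h2 : (1 - t) • W + t • (α • (1 : Matrix (Fin n) (Fin n) ℂ))
          = conjAlgHom U ((1 - t) • diagonal (RCLike.ofReal ∘ lam) + (t * α) • 1) := by
        rw [map_add, _root_.map_smul, _root_.map_smul, _root_.map_one, smul_smul, ← hWc]
      rw [h2, hdiag]
      rfl
    have hmem : Wt ∈ K := by
      rw [hWt_eq]
      exact hKconvex hW hαK (by linarith) ht.le (by ring)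
    have hSWt : ((Wt * matLog Wt).trace).re = ∑ i, μ i * Real.log (μ i) :=
      trace_conj_diag_mul_matLog U μ
    have hlin : ((E * Wt).trace).re = (1 - t) * R1 + (t * α) * R2 := by
      rw [hWt_eq, mul_add, mul_smul_comm, mul_smul_comm, mul_smul_comm, mul_one]
      simp [Matrix.trace_add, Matrix.trace_smul, Complex.real_smul, Complex.add_re,
        Complex.mul_re, hR1, hR2]
      ring
    have hineq : ((E * W).trace).re + ((W * matLog W).trace).re ≤
        ((E * Wt).trace).re + ((Wt * matLog Wt).trace).re := hmin Wt hmem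
    rw [hSW, hSWt, hlin] at hineq
    -- convexity bound
    have hconv : ∀ i : Fin n, μ i * Real.log (μ i) ≤
        (1 - t) * (lam i * Real.log (lam i)) + t * (α * Real.log α) := by
      intro i
      have := Real.convexOn_mul_log.2 (Set.mem_Ici.mpr (hlam_nonneg i))
        (Set.mem_Ici.mpr hα.le) (by linarith : (0:ℝ) ≤ 1 - t) ht.le (by ring)
      simpa [smul_eq_mul, hμ] using this
    have hμj : μ j = t * α := by simp [hμ, hj]
    have hgj : μ j * Real.log (μ j) = t * α * Real.log α + t * α * Real.log t := by
      rw [hμj, Real.log_mul (ne_of_gt ht) (ne_of_gt hα)]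
      ring
    have hglamj : lam j * Real.log (lam j) = 0 := by rw [hj]; simp
    have e1 : ∑ i, μ i * Real.log (μ i)
        = μ j * Real.log (μ j) + ∑ i ∈ Finset.univ.erase j, μ i * Real.log (μ i) :=
      (Finset.add_sum_erase _ _ (Finset.mem_univ j)).symm
    have e2 : ∑ i, lam i * Real.log (lam i)
        = lam j * Real.log (lam j) +
          ∑ i ∈ Finset.univ.erase j, lam i * Real.log (lam i) :=
      (Finset.add_sum_erase _ _ (Finset.mem_univ j)).symm
    have e3 : ∑ i ∈ Finset.univ.erase j, μ i * Real.log (μ i) ≤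
        ∑ i ∈ Finset.univ.erase j,
          ((1 - t) * (lam i * Real.log (lam i)) + t * (α * Real.log α)) :=
      Finset.sum_le_sum fun i _ => hconv i
    have e4 : ∑ i ∈ Finset.univ.erase j,
          ((1 - t) * (lam i * Real.log (lam i)) + t * (α * Real.log α))
        = ∑ i ∈ Finset.univ.erase j, lam i * Real.log (lam i) + t * S := by
      rw [hS, Finset.mul_sum, ← Finset.sum_add_distrib]
      exact Finset.sum_congr rfl fun i _ => by ring
    have hts : 0 ≤ t * (C + α * Real.log t) := by nlinarith [hineq, e3]
    nlinarith [hts]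
  set t0 : ℝ := min (1/2 : ℝ) (Real.exp (-(C + 1) / α)) with ht0def
  have ht0 : 0 < t0 := lt_min (by norm_num) (Real.exp_pos _)
  have ht01 : t0 ≤ 1 := le_trans (min_le_left _ _) (by norm_num)
  have hk := key t0 ht0 ht01
  have hlog : Real.log t0 ≤ -(C + 1) / α := by
    calc Real.log t0 ≤ Real.log (Real.exp (-(C + 1) / α)) :=
          Real.log_le_log ht0 (min_le_right _ _)
      _ = -(C + 1) / α := Real.log_exp _
  have hcc : α * Real.log t0 ≤ -(C + 1) := by
    have h1 := mul_le_mul_of_nonneg_left hlog hα.le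
    have h2 : α * (-(C + 1) / α) = -(C + 1) := by field_simp
    linarith
  linarith
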